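/- Let V be an ℝ-linear subspace of ℝⁿ and V^⊥ its orthogonal complement, and set L₀ := {(v, w) : v ∈ V, w ∈ V^⊥} ⊆ ℝⁿ ⊕ ℝⁿ. If L is a Lagrangian subspace of ℝⁿ ⊕ ℝⁿ with L ∩ L₀ = V × {0}, then the projection ℝⁿ ⊕ ℝⁿ → ℝⁿ, (x, y) ↦ x, restricts to a linear isomorphism from L onto ℝⁿ. -/

import Mathlib

/-- the "in particular" part of Lemma 2.2 of the paper.
If `L` is a Lagrangian subspace of ℝⁿ ⊕ ℝⁿ (with the standard symplectic form
ω₀((x,y),(x',y')) = ⟪x,y'⟫ − ⟪y,x'⟫) satisfying `L ∩ (V × Vᗮ) = V × {0}`,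
then the projection `(x, y) ↦ x` restricts to a linear isomorphism of `L`
onto ℝⁿ. -/
theorem conormal_clean_intersection_projection_bijective
    (n : ℕ) (V : Submodule ℝ (EuclideanSpace ℝ (Fin n)))
    (L : Submodule ℝ (EuclideanSpace ℝ (Fin n) × EuclideanSpace ℝ (Fin n)))
    (hdim : Module.finrank ℝ L = n)
    (hiso : ∀ z ∈ L, ∀ z' ∈ L,
      (inner ℝ z.1 z'.2 : ℝ) - (inner ℝ z.2 z'.1 : ℝ) = 0)
    (hint : L ⊓ V.prod Vᗮ = V.prod ⊥) :
    Function.Bijective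
      ((LinearMap.fst ℝ (EuclideanSpace ℝ (Fin n)) (EuclideanSpace ℝ (Fin n))).comp
        L.subtype) := by
  have hVL : V.prod (⊥ : Submodule ℝ (EuclideanSpace ℝ (Fin n))) ≤ L := by
    rw [← hint]; exact inf_le_left
  have hinj : Function.Injective
      ((LinearMap.fst ℝ (EuclideanSpace ℝ (Fin n)) (EuclideanSpace ℝ (Fin n))).comp
        L.subtype) := by
    rw [← LinearMap.ker_eq_bot, LinearMap.ker_eq_bot']
    rintro ⟨⟨x, y⟩, hz⟩ hx
    have hx0 : x = 0 := hx
    subst hx0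
    have hyV : y ∈ Vᗮ := by
      intro v hv
      have hvL : ((v, 0) : EuclideanSpace ℝ (Fin n) × EuclideanSpace ℝ (Fin n)) ∈ L :=
        hVL ⟨hv, rfl⟩
      have := hiso _ hz _ hvL
      simp only at this
      rw [real_inner_comm]
      simpa using this
    have : ((0 : EuclideanSpace ℝ (Fin n)), y) ∈ V.prod
        (⊥ : Submodule ℝ (EuclideanSpace ℝ (Fin n))) := by
      rw [← hint]; exact ⟨hz, ⟨V.zero_mem, hyV⟩⟩
    have hy0 : y = 0 := this.2
    subst hy0
    rfl
  refine ⟨hinj, ?_⟩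
  have := LinearMap.injective_iff_surjective_of_finrank_eq_finrank
    (f := (LinearMap.fst ℝ (EuclideanSpace ℝ (Fin n)) (EuclideanSpace ℝ (Fin n))).comp
        L.subtype) ?_
  · exact this.mp hinj
  · simp [hdim]
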